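/- Let G be a connected graph with χ(G) > 2 and let q be the chosen vertex. Then the optimal value of the LP relaxation of POP1 satisfies ν(POP1) ≥ 2 + 1/|V| > 2. -/

import Mathlib

open Finset

/-- Core LP lemma: an odd closed walk `w 0 = q, …, w (2k+1) = q` through `q`
forces the POP1 LP objective to be at least `1 + 1/n` for any `n ≥ max(3, k+1)`. -/
lemma pop1_walk_bound {V : Type*} (G : SimpleGraph V)
    (H : ℕ) (hH : 2 ≤ H) (q : V) (g : ℕ → V → ℝ)
    (hbound : ∀ i v, 0 ≤ g i v ∧ g i v ≤ 1)
    (hgH : ∀ v : V, g H v = 0)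
    (hedge1 : ∀ u v : V, G.Adj u v → g 1 u + g 1 v ≥ 2 - g 1 q)
    (hedge2 : ∀ u v : V, G.Adj u v → ∀ i ∈ Icc 2 H,
      (g (i - 1) u - g i u) + (g (i - 1) v - g i v) ≤ g (i - 1) q)
    (hqmax : ∀ v : V, ∀ i ∈ Icc 1 H, g i q - g i v ≥ 0)
    (w : ℕ → V) (k : ℕ) (hk1 : 1 ≤ k)
    (hw0 : w 0 = q) (hwend : w (2 * k + 1) = q)
    (hwadj : ∀ j < 2 * k + 1, G.Adj (w j) (w (j + 1)))
    (n : ℕ) (hn3 : 3 ≤ n) (hnk : k + 1 ≤ n) :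
    ∑ i ∈ Icc 1 H, g i q ≥ 1 + 1 / (n : ℝ) := by
  set S : ℝ := ∑ i ∈ Icc 1 H, g i q with hSdef
  set a1 : ℝ := g 1 q with ha1def
  -- reindexing helper
  have reidx : ∀ f : ℕ → ℝ, ∑ i ∈ Icc 2 H, f i = ∑ j ∈ range (H - 1), f (j + 2) := by
    intro f
    rw [← Finset.Ico_add_one_right_eq_Icc, Finset.sum_Ico_eq_sum_range]
    have hHH : H + 1 - 2 = H - 1 := by omega
    rw [hHH]
    exact Finset.sum_congr rfl (fun j _ => by congr 1; omega)
  have hSeq : S = ∑ j ∈ range (H - 1), g (j + 1) q := by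
    rw [hSdef, ← Finset.Ico_add_one_right_eq_Icc, Finset.sum_Ico_eq_sum_range]
    have hHH : H + 1 - 1 = (H - 1) + 1 := by omega
    rw [hHH, Finset.sum_range_succ]
    have h1 : 1 + (H - 1) = H := by omega
    rw [h1, hgH q, add_zero]
    exact Finset.sum_congr rfl (fun j _ => by congr 1; omega)
  have tele : ∀ x : V, ∑ i ∈ Icc 2 H, (g (i - 1) x - g i x) = g 1 x := by
    intro x
    rw [reidx]
    calc ∑ j ∈ range (H - 1), (g (j + 2 - 1) x - g (j + 2) x)
        = ∑ j ∈ range (H - 1), ((fun j => g (j + 1) x) j - (fun j => g (j + 1) x) (j + 1)) :=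
          Finset.sum_congr rfl (fun j _ => by congr 2 <;> omega)
      _ = g (0 + 1) x - g ((H - 1) + 1) x := Finset.sum_range_sub' (fun j => g (j + 1) x) (H - 1)
      _ = g 1 x := by
          have hHH : (H - 1) + 1 = H := by omega
          rw [hHH, hgH x, sub_zero, zero_add]
  -- L1 : summed edge constraint
  have L1 : ∀ u v : V, G.Adj u v → g 1 u + g 1 v ≤ S := by
    intro u v huv
    have hsum := Finset.sum_le_sum (fun i hi => hedge2 u v huv i hi)
    rw [Finset.sum_add_distrib, tele u, tele v] at hsum
    refine hsum.trans ?_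
    have : ∑ i ∈ Icc 2 H, g (i - 1) q = ∑ j ∈ range (H - 1), g (j + 1) q := by
      rw [reidx]
      exact Finset.sum_congr rfl (fun j _ => by
        have e : j + 2 - 1 = j + 1 := by omega
        rw [e])
    rw [this, ← hSeq]
  have h1H : (1 : ℕ) ∈ Icc 1 H := by simp; omega
  have ha1le : a1 ≤ 1 := (hbound 1 q).2
  -- the alternating induction along the walk
  have claim : ∀ t, t ≤ k → g 1 (w (2 * t)) ≥ a1 + t * (2 - a1 - S) := by
    intro t
    induction t with
    | zero => intro _; rw [show 2 * 0 = 0 by rfl, hw0]; simp [ha1def]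
    | succ t ih =>
      intro ht
      have ht' : t ≤ k := by omega
      have hx0 := ih ht'
      have hadj1 : G.Adj (w (2 * t)) (w (2 * t + 1)) := hwadj _ (by omega)
      have hadj2 : G.Adj (w (2 * t + 1)) (w (2 * t + 2)) := hwadj _ (by omega)
      have hub : g 1 (w (2 * t)) + g 1 (w (2 * t + 1)) ≤ S := L1 _ _ hadj1
      have hlb : g 1 (w (2 * t + 1)) + g 1 (w (2 * t + 2)) ≥ 2 - a1 := hedge1 _ _ hadj2
      have he : 2 * (t + 1) = 2 * t + 2 := by ring
      rw [he]
      push_cast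
      nlinarith [hx0, hub, hlb]
  have hfinal : g 1 (w (2 * k)) + a1 ≤ S := by
    have hadj : G.Adj (w (2 * k)) (w (2 * k + 1)) := hwadj _ (by omega)
    have := L1 _ _ hadj
    rwa [hwend] at this
  have hclaimk := claim k le_rfl
  -- so  2*a1 + k*(2 - a1 - S) ≤ S
  have hkey : 2 * a1 + (k : ℝ) * (2 - a1 - S) ≤ S := by linarith
  have hn0 : (0 : ℝ) < (n : ℝ) := by positivity
  have hninv3 : 1 / (n : ℝ) ≤ 1 / 3 := by
    apply one_div_le_one_div_of_le <;> [norm_num; exact_mod_cast hn3]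
  rcases eq_or_lt_of_le hk1 with hkeq | hk2
  · -- k = 1 : need a1 ≥ 2/3
    have hkeq' : k = 1 := hkeq.symm
    subst hkeq'
    have he1 := hedge1 _ _ (hwadj 0 (by omega))
    have he2 := hedge1 _ _ (hwadj 1 (by omega))
    have he3 := hedge1 _ _ (hwadj 2 (by omega))
    rw [hw0] at he1
    rw [show 2 + 1 = 2 * 1 + 1 by rfl, hwend] at he3
    have hm1 := hqmax (w 1) 1 h1H
    have hm2 := hqmax (w 2) 1 h1H
    have ha1lb : a1 ≥ 2 / 3 := by
      simp only [show (0:ℕ)+1 = 1 from rfl, show (1:ℕ)+1 = 2 from rfl] at he1 he2 he3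
      linarith
    have : S ≥ 4 / 3 := by push_cast at hkey; linarith
    linarith
  · -- k ≥ 2
    have hk2' : (2 : ℝ) ≤ (k : ℝ) := by exact_mod_cast hk2
    have ha10 : 0 ≤ a1 := (hbound 1 q).1
    have hSk : ((k : ℝ) + 1) * S ≥ (k : ℝ) + 2 := by nlinarith
    have hkpos : (0 : ℝ) < (k : ℝ) + 1 := by positivity
    have hS : S ≥ 1 + 1 / ((k : ℝ) + 1) := by
      rw [ge_iff_le, ← sub_nonneg]
      have : S - (1 + 1 / ((k:ℝ)+1)) = (((k:ℝ)+1) * S - ((k:ℝ)+2)) / ((k:ℝ)+1) := by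
        field_simp; ring
      rw [this]
      apply div_nonneg (by linarith) (by linarith)
    have : 1 / (n : ℝ) ≤ 1 / ((k : ℝ) + 1) := by
      apply one_div_le_one_div_of_le (by positivity)
      exact_mod_cast hnk
    linarith


/-- Let `G` be a connected graph with chromatic number `> 2` and let `q` be
the chosen vertex. Then the LP relaxation of POP1 satisfies
`ν(POP1) ≥ 2 + 1/|V| > 2`: every feasible solution has objective value at least
`2 + 1/|V|`. -/
theorem pop1_lp_value_nonbipartite {V : Type*} [Fintype V] (G : SimpleGraph V)
    (hconn : G.Connected) (hchrom : ¬ G.Colorable 2)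
    (H : ℕ) (hH : 2 ≤ H) (q : V) (g : ℕ → V → ℝ)
    (hbound : ∀ i v, 0 ≤ g i v ∧ g i v ≤ 1)
    (hgH : ∀ v : V, g H v = 0)
    (hmono : ∀ v : V, ∀ i ∈ Icc 2 H, g (i - 1) v - g i v ≥ 0)
    (hedge1 : ∀ u v : V, G.Adj u v → g 1 u + g 1 v ≥ 2 - g 1 q)
    (hedge2 : ∀ u v : V, G.Adj u v → ∀ i ∈ Icc 2 H,
      (g (i - 1) u - g i u) + (g (i - 1) v - g i v) ≤ g (i - 1) q)
    (hqmax : ∀ v : V, ∀ i ∈ Icc 1 H, g i q - g i v ≥ 0) :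
    1 + ∑ i ∈ Icc 1 H, g i q ≥ 2 + 1 / (Fintype.card V : ℝ) ∧
    (2 : ℝ) + 1 / (Fintype.card V : ℝ) > 2 := by
  set n := Fintype.card V with hn
  -- `n ≥ 3` since graphs on at most 2 vertices are 2-colorable
  have hn3 : 3 ≤ n := by
    by_contra h
    push_neg at h
    exact hchrom ((G.colorable_of_fintype).mono (by omega))
  -- there is an edge whose endpoints have distances from q of equal parity
  have hpar : ∃ u v : V, G.Adj u v ∧ G.dist q u % 2 = G.dist q v % 2 := by
    by_contra h
    push_neg at h
    apply hchrom
    have C : G.Coloring (ZMod 2) := SimpleGraph.Coloring.mk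
      (fun v => (G.dist q v : ZMod 2))
      (by
        intro a b hab hc
        rw [ZMod.natCast_eq_natCast_iff] at hc
        exact h a b hab hc)
    have := C.colorable
    simpa using this
  obtain ⟨u, v, hadj, hdpar⟩ := hpar
  obtain ⟨pu, hpu⟩ := hconn.exists_walk_length_eq_dist q u
  obtain ⟨pv, hpv⟩ := hconn.exists_walk_length_eq_dist q v
  have hdu : G.dist q u < n := by
    have hp := pu.isPath_of_length_eq_dist hpu
    calc G.dist q u = pu.length := hpu.symm
      _ < n := hp.length_lt
  have hdv : G.dist q v < n := by
    have hp := pv.isPath_of_length_eq_dist hpv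
    calc G.dist q v = pv.length := hpv.symm
      _ < n := hp.length_lt
  -- build the odd closed walk through q
  let p : G.Walk q q := pu.append (SimpleGraph.Walk.cons hadj pv.reverse)
  have hlen : p.length = G.dist q u + G.dist q v + 1 := by
    simp only [p, SimpleGraph.Walk.length_append, SimpleGraph.Walk.length_cons,
      SimpleGraph.Walk.length_reverse, hpu, hpv]
    omega
  obtain ⟨k, hk⟩ : ∃ k, p.length = 2 * k + 1 := by
    refine ⟨(G.dist q u + G.dist q v) / 2, ?_⟩
    omega
  have hwadj : ∀ j < 2 * k + 1, G.Adj (p.getVert j) (p.getVert (j + 1)) := by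
    intro j hj
    exact p.adj_getVert_succ (by omega)
  have hw0 : p.getVert 0 = q := p.getVert_zero
  have hwend : p.getVert (2 * k + 1) = q := by
    rw [← hk]; exact p.getVert_length
  have hk1 : 1 ≤ k := by
    by_contra hk0
    have hk0' : k = 0 := by omega
    have := hwadj 0 (by omega)
    rw [hw0] at this
    have h1q : p.getVert 1 = q := by rw [hk0'] at hwend; simpa using hwend
    rw [h1q] at this
    exact G.irrefl this
  have hnk : k + 1 ≤ n := by omega
  have hmain := pop1_walk_bound G H hH q g hbound hgH hedge1 hedge2 hqmax
    (fun j => p.getVert j) k hk1 hw0 hwend hwadj n hn3 hnk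
  have hnpos : (0 : ℝ) < (n : ℝ) := by positivity
  constructor
  · linarith
  · have : (0 : ℝ) < 1 / (n : ℝ) := by positivity
    linarith
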